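/- arXiv:1601.05909 — 2 statements merged into one kernel-verified Lean document; each statement's English description precedes it below -/
import Mathlib

section
/- Let G be a directed graph on a finite vertex set with a chain cover ℂ (with injective rank function), let k ≥ 1, and for each vertex v define RF_k(v) = {w ∈ RF(v) : code(w) ∈ top_k(RFcode(v))}. If u ∈ RF_k(v), and z is any vertex with v → z and z → u, then u ∈ RF_k(z). -/
/-- A chain cover of the directed graph on `V` with edge relation `step`:
a finite family of chains (nonempty lists of pairwise-distinct vertices,
each vertex reaching the next) such that every vertex lies in exactly one
chain, together with an injective rank function on the chains. -/
structure ChainCover {V : Type*} (step : V → V → Prop) where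
  chains : Finset (List V)
  ne : ∀ C ∈ chains, C ≠ []
  nodup : ∀ C ∈ chains, C.Nodup
  chain : ∀ C ∈ chains, C.Chain' (Relation.ReflTransGen step)
  cover : ∀ v : V, ∃! C, C ∈ chains ∧ v ∈ C
  rank : List V → ℕ
  rank_inj : ∀ C₁ ∈ chains, ∀ C₂ ∈ chains, rank C₁ = rank C₂ → C₁ = C₂

/-- `RFcode(v)`: the set of chain codes `(rank(C), position of first_v(C))`
of the first vertex reachable from `v` in each chain reachable from `v`. -/
def RFcode {V : Type*} [DecidableEq V] (step : V → V → Prop) (cc : ChainCover step)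
    (v : V) : Set (ℕ × ℕ) :=
  {c | ∃ C ∈ cc.chains, ∃ w ∈ C, Relation.ReflTransGen step v w ∧
    (∀ w' ∈ C, Relation.ReflTransGen step v w' → C.idxOf w ≤ C.idxOf w') ∧
    c = (cc.rank C, C.idxOf w)}

/-- `RLcode(v)`: the set of chain codes `(rank(C), position of last_v(C))`
of the last vertex that can reach `v` in each chain that can reach `v`. -/
def RLcode {V : Type*} [DecidableEq V] (step : V → V → Prop) (cc : ChainCover step)
    (v : V) : Set (ℕ × ℕ) :=
  {c | ∃ C ∈ cc.chains, ∃ w ∈ C, Relation.ReflTransGen step w v ∧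
    (∀ w' ∈ C, Relation.ReflTransGen step w' v → C.idxOf w' ≤ C.idxOf w) ∧
    c = (cc.rank C, C.idxOf w)}

/-- `top_k(S)`: the codes of `S` whose first component is among the `k`
smallest first components occurring in `S` (all of `S` if it has at most `k`
elements). -/
def topk (k : ℕ) (S : Set (ℕ × ℕ)) : Set (ℕ × ℕ) :=
  {c ∈ S | ({c' ∈ S | c'.1 < c.1}).ncard < k}

/-- `u ∈ RF_k(v)`: `u` is a first reachable vertex of some chain for `v`,
and its chain code belongs to `top_k(RFcode(v))`. -/
def InRFk {V : Type*} [DecidableEq V] (step : V → V → Prop) (cc : ChainCover step)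
    (k : ℕ) (v u : V) : Prop :=
  ∃ C ∈ cc.chains, u ∈ C ∧ Relation.ReflTransGen step v u ∧
    (∀ w' ∈ C, Relation.ReflTransGen step v w' → C.idxOf u ≤ C.idxOf w') ∧
    (cc.rank C, C.idxOf u) ∈ topk k (RFcode step cc v)

section
variable {V : Type*} [DecidableEq V] (step : V → V → Prop) (cc : ChainCover step)

lemma RFcode_finite (v : V) : (RFcode step cc v).Finite := by
  have hsub : RFcode step cc v ⊆
      ⋃ C ∈ (cc.chains : Set (List V)), ⋃ w ∈ {w | w ∈ C}, {(cc.rank C, C.idxOf w)} := by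
    rintro c ⟨C, hC, w, hw, _, _, rfl⟩
    simp only [Set.mem_iUnion]
    exact ⟨C, hC, w, hw, rfl⟩
  refine Set.Finite.subset ?_ hsub
  refine Set.Finite.biUnion (cc.chains.finite_toSet) fun C _ => ?_
  refine Set.Finite.biUnion ?_ fun w _ => Set.finite_singleton _
  exact (Set.Finite.subset C.toFinset.finite_toSet (by simp [Set.subset_def]))

lemma RFcode_fst_inj (v : V) :
    ∀ c₁ ∈ RFcode step cc v, ∀ c₂ ∈ RFcode step cc v, c₁.1 = c₂.1 → c₁ = c₂ := by
  rintro _ ⟨C₁, hC₁, w₁, hw₁, hr₁, hm₁, rfl⟩ _ ⟨C₂, hC₂, w₂, hw₂, hr₂, hm₂, rfl⟩ h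
  simp only at h
  obtain rfl := cc.rank_inj C₁ hC₁ C₂ hC₂ h
  have := le_antisymm (hm₁ w₂ hw₂ hr₂) (hm₂ w₁ hw₁ hr₁)
  simp [this]
end

theorem RFk_persists_along_path {V : Type*} [Fintype V] [DecidableEq V]
    (step : V → V → Prop) (cc : ChainCover step) (k : ℕ) (hk : 1 ≤ k)
    (u v z : V) (hu : InRFk step cc k v u)
    (hvz : Relation.ReflTransGen step v z) (hzu : Relation.ReflTransGen step z u) :
    InRFk step cc k z u := by
  obtain ⟨C, hC, huC, hvu, hmin, hmem, hcard⟩ := hu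
  have hminz : ∀ w' ∈ C, Relation.ReflTransGen step z w' → C.idxOf u ≤ C.idxOf w' :=
    fun w' hw' hzw' => hmin w' hw' (hvz.trans hzw')
  refine ⟨C, hC, huC, hzu, hminz, ⟨C, hC, u, huC, hzu, hminz, rfl⟩, ?_⟩
  set R := cc.rank C with hR
  set Sz := {c' ∈ RFcode step cc z | c'.1 < R} with hSz
  set Sv := {c' ∈ RFcode step cc v | c'.1 < R} with hSv
  have hSvfin : Sv.Finite := (RFcode_finite step cc v).subset (Set.sep_subset _ _)
  have hSzfin : Sz.Finite := (RFcode_finite step cc z).subset (Set.sep_subset _ _)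
  have himg : Prod.fst '' Sz ⊆ Prod.fst '' Sv := by
    rintro r ⟨c', ⟨hc', hlt⟩, rfl⟩
    obtain ⟨C', hC', w, hw, hzw, hm, rfl⟩ := hc'
    have hvw : Relation.ReflTransGen step v w := hvz.trans hzw
    have hTfin : {x | x ∈ C' ∧ Relation.ReflTransGen step v x}.Finite :=
      Set.Finite.subset C'.toFinset.finite_toSet (by simp [Set.subset_def]; tauto)
    obtain ⟨w₀, ⟨hw₀C, hvw₀⟩, hw₀min⟩ :=
      Set.exists_min_image _ C'.idxOf hTfin ⟨w, hw, hvw⟩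
    exact ⟨(cc.rank C', C'.idxOf w₀),
      ⟨⟨C', hC', w₀, hw₀C, hvw₀, fun x hx hvx => hw₀min x ⟨hx, hvx⟩, rfl⟩, hlt⟩, rfl⟩
  have hinj : Set.InjOn Prod.fst Sz := fun c₁ h₁ c₂ h₂ h =>
    RFcode_fst_inj step cc z c₁ h₁.1 c₂ h₂.1 h
  calc Sz.ncard = (Prod.fst '' Sz).ncard := (Set.ncard_image_of_injOn hinj).symm
    _ ≤ (Prod.fst '' Sv).ncard := Set.ncard_le_ncard himg (hSvfin.image _)
    _ ≤ Sv.ncard := Set.ncard_image_le hSvfin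
    _ < k := hcard
end

section
/- Let G be the transformed graph of a temporal graph, let a, b ∈ 𝒱 and t_α ≤ t_ω, suppose {t ∈ T_out(a) : t ≥ t_α} ≠ ∅, and let t_o = min{t ∈ T_out(a) : t ≥ t_α}. Then: (1) P(a, b, [t_α, t_ω]) ≠ ∅ if and only if the set R = {t' ∈ T_in(b) : t' ≤ t_ω and out(a, t_o) →_G in(b, t')} is nonempty; and (2) if these sets are nonempty, then the earliest-arrival time min{end(P) : P ∈ P(a, b, [t_α, t_ω])} equals min R. -/
/-- A copy of an original vertex: `inn v t` is the vertex `in(v, t)` and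
`out v t` is the vertex `out(v, t)` of the transformed graph. -/
inductive Copy (V : Type*) where
  | inn : V → ℕ → Copy V
  | out : V → ℕ → Copy V

/-- The original vertex of which a vertex of the transformed graph is a copy. -/
def Copy.base {V : Type*} : Copy V → V
  | .inn v _ => v
  | .out v _ => v

/-- The time stamp of a vertex of the transformed graph. -/
def Copy.time {V : Type*} : Copy V → ℕ
  | .inn _ t => t
  | .out _ t => t

/-- `T_in(v)`: the set of arrival times of in-edges of `v`. -/
def Tin {V : Type*} (E : Finset (V × V × ℕ × ℕ)) (v : V) : Set ℕ :=
  {s | ∃ u t l, (u, v, t, l) ∈ E ∧ s = t + l}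

/-- `T_out(v)`: the set of starting times of out-edges of `v`. -/
def Tout {V : Type*} (E : Finset (V × V × ℕ × ℕ)) (v : V) : Set ℕ :=
  {t | ∃ u l, (v, u, t, l) ∈ E}

/-- The edge relation of the transformed graph `G` of the temporal graph with
temporal edge set `E`. -/
inductive GEdge {V : Type*} (E : Finset (V × V × ℕ × ℕ)) : Copy V → Copy V → Prop where
  | in_in {v : V} {t t' : ℕ} : t ∈ Tin E v → t' ∈ Tin E v → t < t' →
      (∀ s ∈ Tin E v, s ≤ t ∨ t' ≤ s) → GEdge E (.inn v t) (.inn v t')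
  | out_out {v : V} {t t' : ℕ} : t ∈ Tout E v → t' ∈ Tout E v → t < t' →
      (∀ s ∈ Tout E v, s ≤ t ∨ t' ≤ s) → GEdge E (.out v t) (.out v t')
  | in_out {v : V} {t s : ℕ} : t ∈ Tin E v → s ∈ Tout E v → t ≤ s →
      (∀ s' ∈ Tout E v, t ≤ s' → s ≤ s') →
      (∀ t' ∈ Tin E v, t' ≤ s → t' ≤ t) →
      GEdge E (.inn v t) (.out v s)
  | cross {u v : V} {t l : ℕ} : (u, v, t, l) ∈ E → GEdge E (.out u t) (.inn v (t + l))

/-- Membership in the vertex set of the transformed graph. -/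
def IsVert {V : Type*} (E : Finset (V × V × ℕ × ℕ)) : Copy V → Prop
  | .inn v t => t ∈ Tin E v
  | .out v t => t ∈ Tout E v

/-- Consecutive-edge condition for a temporal path: the head vertex of the next
edge is the tail vertex of the current one, and `t_i + λ_i ≤ t_{i+1}`. -/
def StepOK {V : Type*} (e f : V × V × ℕ × ℕ) : Prop :=
  e.2.1 = f.1 ∧ e.2.2.1 + e.2.2.2 ≤ f.2.2.1

/-- `P` is a temporal path from `a` to `b` in the temporal graph with
temporal edge set `E`. -/
def IsTempPath {V : Type*} (E : Finset (V × V × ℕ × ℕ)) (a b : V)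
    (P : List (V × V × ℕ × ℕ)) : Prop :=
  P ≠ [] ∧ (∀ e ∈ P, e ∈ E) ∧ List.Chain' StepOK P ∧
    (P.head?.map fun e => e.1) = some a ∧ (P.getLast?.map fun e => e.2.1) = some b

/-- The starting time `start(P)` of a (nonempty) temporal path. -/
def startT {V : Type*} (P : List (V × V × ℕ × ℕ)) : ℕ :=
  (P.head?.map fun e => e.2.2.1).getD 0

/-- The ending time `end(P)` of a (nonempty) temporal path. -/
def endT {V : Type*} (P : List (V × V × ℕ × ℕ)) : ℕ :=
  (P.getLast?.map fun e => e.2.2.1 + e.2.2.2).getD 0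

/-- The duration `dura(P) = end(P) - start(P)` of a temporal path. -/
def duraT {V : Type*} (P : List (V × V × ℕ × ℕ)) : ℕ := endT P - startT P


section Helpers

variable {V : Type*} (E : Finset (V × V × ℕ × ℕ))

lemma chain_reach (S : Set ℕ) (mk : ℕ → Copy V)
    (hedge : ∀ t t', t ∈ S → t' ∈ S → t < t' → (∀ s ∈ S, s ≤ t ∨ t' ≤ s) →
      GEdge E (mk t) (mk t')) :
    ∀ n t t', t' - t ≤ n → t ∈ S → t' ∈ S → t ≤ t' →
      Relation.ReflTransGen (GEdge E) (mk t) (mk t') := by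
  intro n
  induction n with
  | zero =>
    intro t t' h ht ht' hle
    have : t = t' := by omega
    subst this; exact .refl
  | succ n ih =>
    intro t t' h ht ht' hle
    rcases eq_or_lt_of_le hle with rfl | hlt
    · exact .refl
    · have hne : {s | s ∈ S ∧ t < s}.Nonempty := ⟨t', ht', hlt⟩
      set m := sInf {s | s ∈ S ∧ t < s} with hm
      have hmem : m ∈ {s | s ∈ S ∧ t < s} := Nat.sInf_mem hne
      have hmin : ∀ s ∈ S, t < s → m ≤ s := fun s hs hts => Nat.sInf_le ⟨hs, hts⟩
      have htm : t < m := hmem.2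
      have hmt' : m ≤ t' := hmin t' ht' hlt
      have hedge1 : GEdge E (mk t) (mk m) := by
        refine hedge t m ht hmem.1 htm ?_
        intro s hs
        rcases le_or_gt s t with h1 | h1
        · exact Or.inl h1
        · exact Or.inr (hmin s hs h1)
      exact Relation.ReflTransGen.head hedge1
        (ih m t' (by omega) hmem.1 ht' hmt')

lemma reach_in_out {v : V} {t s : ℕ} (ht : t ∈ Tin E v) (hs : s ∈ Tout E v)
    (hts : t ≤ s) :
    Relation.ReflTransGen (GEdge E) (.inn v t) (.out v s) := by
  have hne : {x | x ∈ Tout E v ∧ t ≤ x}.Nonempty := ⟨s, hs, hts⟩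
  set s' := sInf {x | x ∈ Tout E v ∧ t ≤ x} with hs'def
  have hs'mem : s' ∈ {x | x ∈ Tout E v ∧ t ≤ x} := Nat.sInf_mem hne
  have hs'min : ∀ x ∈ Tout E v, t ≤ x → s' ≤ x := fun x h1 h2 => Nat.sInf_le ⟨h1, h2⟩
  have hts' : t ≤ s' := hs'mem.2
  have hs's : s' ≤ s := hs'min s hs hts
  have hbdd : BddAbove {x | x ∈ Tin E v ∧ x ≤ s'} := ⟨s', fun x hx => hx.2⟩
  have hne2 : {x | x ∈ Tin E v ∧ x ≤ s'}.Nonempty := ⟨t, ht, hts'⟩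
  set t' := sSup {x | x ∈ Tin E v ∧ x ≤ s'} with ht'def
  have ht'mem : t' ∈ {x | x ∈ Tin E v ∧ x ≤ s'} := Nat.sSup_mem hne2 hbdd
  have ht'max : ∀ x ∈ Tin E v, x ≤ s' → x ≤ t' := fun x h1 h2 => le_csSup hbdd ⟨h1, h2⟩
  have htt' : t ≤ t' := ht'max t ht hts'
  have h1 : Relation.ReflTransGen (GEdge E) (.inn v t) (.inn v t') :=
    chain_reach E (Tin E v) (fun x => .inn v x)
      (fun a b h1 h2 h3 h4 => .in_in h1 h2 h3 h4) (t' - t) t t' le_rfl ht ht'mem.1 htt'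
  have h2 : GEdge E (.inn v t') (.out v s') := by
    refine .in_out ht'mem.1 hs'mem.1 ht'mem.2 ?_ ?_
    · exact fun x hx hx2 => hs'min x hx (le_trans htt' hx2)
    · exact fun x hx1 hx2 => ht'max x hx1 hx2
  have h3 : Relation.ReflTransGen (GEdge E) (.out v s') (.out v s) :=
    chain_reach E (Tout E v) (fun x => .out v x)
      (fun a b h1 h2 h3 h4 => .out_out h1 h2 h3 h4) (s - s') s' s le_rfl hs'mem.1 hs hs's
  exact (h1.trans (Relation.ReflTransGen.single h2)).trans h3

end Helpers

section Helpers2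

variable {V : Type*} (E : Finset (V × V × ℕ × ℕ))

lemma path_reach : ∀ (P : List (V × V × ℕ × ℕ)) (e : V × V × ℕ × ℕ) (b : V),
    (∀ x ∈ e :: P, x ∈ E) → List.Chain' StepOK (e :: P) →
    ((e :: P).getLast?.map fun x => x.2.1) = some b →
    Relation.ReflTransGen (GEdge E) (.out e.1 e.2.2.1) (.inn b (endT (e :: P))) := by
  intro P
  induction P with
  | nil =>
    intro e b hE _ hb
    obtain ⟨u, v, t, l⟩ := e
    have hb' : v = b := by simpa using hb
    subst hb'
    simpa [endT] using
      Relation.ReflTransGen.single (GEdge.cross (hE (u, v, t, l) (by simp)))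
  | cons f rest ih =>
    intro e b hE hch hb
    obtain ⟨u, v, t, l⟩ := e
    obtain ⟨u2, v2, t2, l2⟩ := f
    obtain ⟨hef, hch'⟩ := List.isChain_cons_cons.mp hch
    obtain ⟨hv, hle⟩ : v = u2 ∧ t + l ≤ t2 := hef
    subst hv
    have hcross : GEdge E (.out u t) (.inn v (t + l)) :=
      GEdge.cross (hE (u, v, t, l) (by simp))
    have htin : t + l ∈ Tin E v := ⟨u, t, l, hE _ (by simp), rfl⟩
    have htout : t2 ∈ Tout E v := ⟨v2, l2, hE _ (by simp)⟩
    have hmid := reach_in_out E htin htout hle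
    have htail := ih (v, v2, t2, l2) b (fun x hx => hE x (by simp at hx ⊢; tauto)) hch'
      (by simpa using hb)
    have hend : endT ((u, v, t, l) :: (v, v2, t2, l2) :: rest)
        = endT ((v, v2, t2, l2) :: rest) := by
      simp [endT, List.getLast?_cons_cons]
    rw [hend]
    exact ((Relation.ReflTransGen.single hcross).trans hmid).trans htail

def Qprop (a : V) (t0 : ℕ) : Copy V → Prop
  | .inn v t => ∃ P, IsTempPath E a v P ∧ t0 ≤ startT P ∧ endT P ≤ t
  | .out v s => (v = a ∧ t0 ≤ s) ∨ ∃ P, IsTempPath E a v P ∧ t0 ≤ startT P ∧ endT P ≤ s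

lemma Q_step {a : V} {t0 : ℕ} {x y : Copy V} (h : GEdge E x y)
    (hx : Qprop E a t0 x) : Qprop E a t0 y := by
  cases h with
  | in_in h1 h2 h3 h4 =>
    obtain ⟨P, hP, h5, h6⟩ := hx
    exact ⟨P, hP, h5, h6.trans h3.le⟩
  | out_out h1 h2 h3 h4 =>
    rcases hx with ⟨rfl, h5⟩ | ⟨P, hP, h5, h6⟩
    · exact Or.inl ⟨rfl, h5.trans h3.le⟩
    · exact Or.inr ⟨P, hP, h5, h6.trans h3.le⟩
  | in_out h1 h2 h3 h4 h5 =>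
    obtain ⟨P, hP, h6, h7⟩ := hx
    exact Or.inr ⟨P, hP, h6, h7.trans h3⟩
  | @cross u v t l hE' =>
    rcases hx with ⟨rfl, h5⟩ | ⟨P, hP, h5, h6⟩
    · exact ⟨[(u, v, t, l)], ⟨by simp, by simpa using hE', List.isChain_singleton _, by simp [List.head?],
        by simp⟩, by simpa [startT, List.head?] using h5, by simp [endT]⟩
    · obtain ⟨hne, hmem, hch, hhd, hlast⟩ := hP
      obtain ⟨p, P', rfl⟩ := List.exists_cons_of_ne_nil hne
      have hg : (p :: P').getLast? = some ((p :: P').getLast (by simp)) :=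
        List.getLast?_eq_getLast (by simp)
      set g := (p :: P').getLast (by simp) with hgdef
      have hgu : g.2.1 = u := by
        rw [hg] at hlast; simpa using hlast
      have hgend : g.2.2.1 + g.2.2.2 = endT (p :: P') := by
        simp [endT, hg]
      refine ⟨(p :: P') ++ [(u, v, t, l)], ⟨by simp, ?_, ?_, ?_, ?_⟩, ?_, ?_⟩
      · intro x hx
        rcases List.mem_append.mp hx with h | h
        · exact hmem x h
        · simpa using (by simpa using h : x = (u, v, t, l)) ▸ hE'
      · refine List.isChain_append.mpr ⟨hch, List.isChain_singleton _, ?_⟩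
        intro x hxl y hyh
        rw [hg] at hxl
        obtain rfl : g = x := by simpa using hxl
        obtain rfl : (u, v, t, l) = y := by simpa using hyh
        refine ⟨hgu, ?_⟩
        show g.2.2.1 + g.2.2.2 ≤ t
        omega
      · simpa using hhd
      · show Option.map (fun e => e.2.1) ((p :: P') ++ [(u, v, t, l)]).getLast? = some v
        rw [List.getLast?_concat]
        rfl
      · simpa [startT] using h5
      · show endT ((p :: P') ++ [(u, v, t, l)]) ≤ t + l
        simp only [endT]
        rw [List.getLast?_concat]
        simp

lemma reach_Q {a : V} {t0 : ℕ} {x y : Copy V}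
    (h : Relation.ReflTransGen (GEdge E) x y) (hx : Qprop E a t0 x) : Qprop E a t0 y := by
  induction h with
  | refl => exact hx
  | tail _ e ih => exact Q_step E e ih

end Helpers2

theorem earliest_arrival_time_correct {V : Type*} (E : Finset (V × V × ℕ × ℕ))
    (a b : V) (ta tw : ℕ) (htatw : ta ≤ tw)
    (t0 : ℕ) (ht0 : t0 ∈ Tout E a) (ht0ge : ta ≤ t0)
    (ht0min : ∀ t ∈ Tout E a, ta ≤ t → t0 ≤ t) :
    ((∃ P, IsTempPath E a b P ∧ ta ≤ startT P ∧ endT P ≤ tw) ↔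
      {t' | t' ∈ Tin E b ∧ t' ≤ tw ∧
        Relation.ReflTransGen (GEdge E) (.out a t0) (.inn b t')}.Nonempty) ∧
    ((∃ P, IsTempPath E a b P ∧ ta ≤ startT P ∧ endT P ≤ tw) →
      sInf {n | ∃ P, (IsTempPath E a b P ∧ ta ≤ startT P ∧ endT P ≤ tw) ∧ endT P = n} =
      sInf {t' | t' ∈ Tin E b ∧ t' ≤ tw ∧
        Relation.ReflTransGen (GEdge E) (.out a t0) (.inn b t')}) := by
  have key1 : ∀ P, IsTempPath E a b P → ta ≤ startT P →
      endT P ∈ Tin E b ∧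
        Relation.ReflTransGen (GEdge E) (.out a t0) (.inn b (endT P)) := by
    intro P hP hstart
    obtain ⟨hne, hmem, hch, hhd, hlast⟩ := hP
    obtain ⟨p, P', rfl⟩ := List.exists_cons_of_ne_nil hne
    have hpa : p.1 = a := by simpa using hhd
    have hstart' : startT (p :: P') = p.2.2.1 := by simp [startT]
    have hg : (p :: P').getLast? = some ((p :: P').getLast (by simp)) :=
      List.getLast?_eq_getLast (by simp)
    set g := (p :: P').getLast (by simp) with hgdef
    have hgmem : g ∈ E := hmem g (List.getLast_mem _)
    have hgb : g.2.1 = b := by rw [hg] at hlast; simpa using hlast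
    have hgend : endT (p :: P') = g.2.2.1 + g.2.2.2 := by simp [endT, hg]
    have htinb : endT (p :: P') ∈ Tin E b := by
      rw [hgend]
      refine ⟨g.1, g.2.2.1, g.2.2.2, ?_, rfl⟩
      have heta : (g.1, g.2.1, g.2.2.1, g.2.2.2) = g := rfl
      rw [← hgb, heta]; exact hgmem
    have hp1 : p.2.2.1 ∈ Tout E a := by
      refine ⟨p.2.1, p.2.2.2, ?_⟩
      have heta : (p.1, p.2.1, p.2.2.1, p.2.2.2) = p := rfl
      rw [← hpa, heta]; exact hmem p (by simp)
    have ht0le : t0 ≤ p.2.2.1 := ht0min _ hp1 (hstart' ▸ hstart)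
    have h1 : Relation.ReflTransGen (GEdge E) (.out a t0) (.out a p.2.2.1) :=
      chain_reach E (Tout E a) (fun x => .out a x)
        (fun s s' hs hs' hlt hcons => .out_out hs hs' hlt hcons)
        _ t0 p.2.2.1 le_rfl ht0 hp1 ht0le
    have h2 := path_reach E P' p b hmem hch hlast
    rw [hpa] at h2
    exact ⟨htinb, h1.trans h2⟩
  have key2 : ∀ t', Relation.ReflTransGen (GEdge E) (.out a t0) (.inn b t') →
      ∃ P, IsTempPath E a b P ∧ t0 ≤ startT P ∧ endT P ≤ t' :=
    fun t' h => reach_Q E h (Or.inl ⟨rfl, le_rfl⟩)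
  constructor
  · constructor
    · rintro ⟨P, hP, h1, h2⟩
      exact ⟨endT P, (key1 P hP h1).1, h2, (key1 P hP h1).2⟩
    · rintro ⟨t', h1, h2, h3⟩
      obtain ⟨P, hP, h4, h5⟩ := key2 t' h3
      exact ⟨P, hP, le_trans ht0ge h4, le_trans h5 h2⟩
  · rintro ⟨P, hP, h1, h2⟩
    have hSne : {n | ∃ P, (IsTempPath E a b P ∧ ta ≤ startT P ∧ endT P ≤ tw) ∧
        endT P = n}.Nonempty := ⟨endT P, P, ⟨hP, h1, h2⟩, rfl⟩
    have hRne : {t' | t' ∈ Tin E b ∧ t' ≤ tw ∧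
        Relation.ReflTransGen (GEdge E) (.out a t0) (.inn b t')}.Nonempty :=
      ⟨endT P, (key1 P hP h1).1, h2, (key1 P hP h1).2⟩
    apply le_antisymm
    · obtain ⟨hr1, hr2, hr3⟩ := Nat.sInf_mem hRne
      obtain ⟨P2, hP2, h4, h5⟩ := key2 _ hr3
      exact le_trans (Nat.sInf_le ⟨P2, ⟨hP2, le_trans ht0ge h4, le_trans h5 hr2⟩, rfl⟩) h5
    · obtain ⟨P2, ⟨hP2, h4, h5⟩, heq⟩ := Nat.sInf_mem hSne
      exact heq ▸ Nat.sInf_le ⟨(key1 P2 hP2 h4).1, h5, (key1 P2 hP2 h4).2⟩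
end
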